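/- In the setting of the previous statement with data y = Au† + ε for some u† ∈ ℝⁿ and ε ∈ ℝᵐ, the solution admits the representation x(t) = x₀ + (E − (C(t)C₀⁻¹)^{1/α})(u† − x₀) + (C(t)C₀⁻¹)^{1/α} ∫₀ᵗ (C(s)C₀⁻¹)^{1−1/α} ds · C₀AᵀΓ⁻¹ε. -/

import Mathlib

open Matrix Set

private lemma scalar_ode_aux (α μ : ℝ) (hα : 1 ≤ α) (hμ : 0 ≤ μ) (u b : ℝ) (w : ℝ → ℝ)
    (hw : ∀ t : ℝ, 0 ≤ t → HasDerivAt w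
      (-(μ / (1 + α * t * μ)) * (w t - u) + b / (1 + α * t * μ)) t)
    (T : ℝ) (hT : 0 ≤ T) :
    w T = u + ((1 + α * T * μ) ^ (-(1/α) : ℝ)) * (w 0 - u) +
      ((1 + α * T * μ) ^ (-(1/α) : ℝ)) *
        (∫ s in (0:ℝ)..T, (1 + α * s * μ) ^ ((1/α - 1) : ℝ)) * b := by
  have hα0 : (0:ℝ) < α := lt_of_lt_of_le one_pos hα
  set c : ℝ → ℝ := fun t => 1 + α * t * μ with hc
  have hcpos : ∀ t : ℝ, 0 ≤ t → 0 < c t := by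
    intro t ht
    have : 0 ≤ α * t * μ := by positivity
    simp only [hc]; linarith
  have hc0 : c 0 = 1 := by simp [hc]
  have hcderiv : ∀ t : ℝ, HasDerivAt c (α * μ) t := by
    intro t
    have h1 : HasDerivAt (fun t : ℝ => α * t * μ) (α * μ) t := by
      simpa using ((hasDerivAt_id t).const_mul α).mul_const μ
    exact h1.const_add 1
  set Φ : ℝ → ℝ := fun t => (c t) ^ ((1/α) : ℝ) with hΦ
  have hΦderiv : ∀ t : ℝ, 0 ≤ t → HasDerivAt Φ (μ * (c t) ^ ((1/α - 1) : ℝ)) t := by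
    intro t ht
    have hne : c t ≠ 0 := ne_of_gt (hcpos t ht)
    have := (Real.hasDerivAt_rpow_const (x := c t) (p := (1/α : ℝ)) (Or.inl hne)).comp t (hcderiv t)
    refine this.congr_deriv ?_
    field_simp
  have hrs : ∀ t : ℝ, 0 ≤ t → (c t) ^ ((1/α - 1) : ℝ) = Φ t / c t := by
    intro t ht
    rw [hΦ, Real.rpow_sub (hcpos t ht), Real.rpow_one]
  set I : ℝ → ℝ := fun t => if μ = 0 then t else (Φ t - 1) / μ with hI
  have hI0 : I 0 = 0 := by
    by_cases h : μ = 0 <;> simp [hI, h, hΦ, hc0, Real.one_rpow]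
  have hIderiv : ∀ t : ℝ, 0 ≤ t → HasDerivAt I ((c t) ^ ((1/α - 1) : ℝ)) t := by
    intro t ht
    by_cases h : μ = 0
    · have hIid : I = fun t : ℝ => t := by funext s; simp [hI, h]
      rw [hIid]
      have hc1 : c t = 1 := by simp [hc, h]
      rw [hc1, Real.one_rpow]
      exact hasDerivAt_id t
    · have hIf : I = fun s => (Φ s - 1) / μ := by funext s; simp [hI, h]
      rw [hIf]
      have := ((hΦderiv t ht).sub_const 1).div_const μ
      refine this.congr_deriv ?_
      field_simp
  set g : ℝ → ℝ := fun t => Φ t * (w t - u) - I t * b with hg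
  have hgderiv : ∀ t : ℝ, 0 ≤ t → HasDerivAt g 0 t := by
    intro t ht
    have h1 := (hΦderiv t ht).mul ((hw t ht).sub_const u)
    have h2 := (hIderiv t ht).mul_const b
    have h := h1.sub h2
    refine h.congr_deriv (Eq.symm ?_)
    rw [hrs t ht]
    have hne : c t ≠ 0 := ne_of_gt (hcpos t ht)
    show (0:ℝ) = μ * (Φ t / c t) * (w t - u) +
      Φ t * (-(μ / c t) * (w t - u) + b / c t) - Φ t / c t * b
    field_simp
    ring
  -- g is constant on [0, T]
  have hconst : g T = g 0 := by
    have hcont : ContinuousOn g (Icc 0 T) := by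
      intro s hs
      exact ((hgderiv s hs.1).continuousAt).continuousWithinAt
    have := constant_of_has_deriv_right_zero hcont
      (fun s hs => ((hgderiv s hs.1).hasDerivWithinAt)) T (right_mem_Icc.2 hT)
    exact this
  -- compute the integral
  have hint : (∫ s in (0:ℝ)..T, (c s) ^ ((1/α - 1) : ℝ)) = I T := by
    have huIcc : uIcc (0:ℝ) T = Icc 0 T := uIcc_of_le hT
    have hii : IntervalIntegrable (fun s => (c s) ^ ((1/α - 1) : ℝ))
        MeasureTheory.volume 0 T := by
      apply ContinuousOn.intervalIntegrable
      rw [huIcc]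
      intro s hs
      have hne : c s ≠ 0 := ne_of_gt (hcpos s hs.1)
      exact ((Real.continuousAt_rpow_const (c s) _ (Or.inl hne)).comp
        ((hcderiv s).continuousAt)).continuousWithinAt
    have := intervalIntegral.integral_eq_sub_of_hasDerivAt
      (f := I) (f' := fun s => (c s) ^ ((1/α - 1) : ℝ))
      (fun s hs => hIderiv s (by rw [huIcc] at hs; exact hs.1)) hii
    rw [this, hI0, sub_zero]
  have hΦT : Φ T > 0 := Real.rpow_pos_of_pos (hcpos T hT) _
  have hΦne : Φ T ≠ 0 := ne_of_gt hΦT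
  have hneg : (c T) ^ (-(1/α) : ℝ) = (Φ T)⁻¹ := by
    rw [hΦ, Real.rpow_neg (le_of_lt (hcpos T hT))]
  have key : Φ T * (w T - u) - I T * b = Φ 0 * (w 0 - u) - I 0 * b := hconst
  rw [hI0, hΦ] at key
  simp only [hc0, Real.one_rpow, one_mul, zero_mul, sub_zero] at key
  show w T = u + (c T) ^ (-(1/α) : ℝ) * (w 0 - u) +
      (c T) ^ (-(1/α) : ℝ) * (∫ s in (0:ℝ)..T, (c s) ^ ((1/α - 1) : ℝ)) * b
  rw [hint, hneg]
  have : w T - u = (Φ T)⁻¹ * (w 0 - u) + (Φ T)⁻¹ * I T * b := by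
    field_simp
    linarith [key]
  linarith [this]

/-- Spectral power `(C(t)C₀⁻¹)^(-p) = S diag((1+αtμᵢ)^p) S⁻¹`, defined via the
shared diagonalization `C₀AᵀΓ⁻¹A = S diag(μ) S⁻¹`. -/
noncomputable def specPow {n : ℕ} (S : Matrix (Fin n) (Fin n) ℝ) (μ : Fin n → ℝ)
    (α p t : ℝ) : Matrix (Fin n) (Fin n) ℝ :=
  S * Matrix.diagonal (fun i => (1 + α * t * μ i) ^ (p : ℝ)) * S⁻¹

theorem representation_with_truth {n m k : ℕ} (hk : k ≤ n) (α : ℝ) (hα : 1 ≤ α)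
    (C₀ : Matrix (Fin n) (Fin n) ℝ) (hC₀ : C₀.PosDef)
    (A : Matrix (Fin m) (Fin n) ℝ)
    (Γ : Matrix (Fin m) (Fin m) ℝ) (hΓ : Γ.PosDef)
    (udag : Fin n → ℝ) (ε : Fin m → ℝ) (y : Fin m → ℝ)
    (hy : y = A *ᵥ udag + ε)
    (S : Matrix (Fin n) (Fin n) ℝ) (μ : Fin n → ℝ)
    (hS : IsUnit S.det)
    (hμpos : ∀ i : Fin n, (i : ℕ) < k → 0 < μ i)
    (hμzero : ∀ i : Fin n, k ≤ (i : ℕ) → μ i = 0)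
    (hdiag : C₀ * Aᵀ * Γ⁻¹ * A = S * Matrix.diagonal μ * S⁻¹)
    (C : ℝ → Matrix (Fin n) (Fin n) ℝ)
    (hC : ∀ t : ℝ, C t = C₀ * (1 + (α * t) • (Aᵀ * Γ⁻¹ * A * C₀))⁻¹)
    (x₀ : Fin n → ℝ) (x : ℝ → Fin n → ℝ) (hx0 : x 0 = x₀)
    (hx : ∀ t : ℝ, 0 ≤ t → ∀ i : Fin n,
      HasDerivAt (fun s => x s i)
        (-((C t * Aᵀ * Γ⁻¹) *ᵥ (A *ᵥ x t - y)) i) t) :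
    ∀ t : ℝ, 0 ≤ t →
      x t = x₀ + (1 - specPow S μ α (-(1 / α)) t) *ᵥ (udag - x₀) +
        (specPow S μ α (-(1 / α)) t *
          Matrix.of (fun i j => ∫ s in (0:ℝ)..t, specPow S μ α (1 / α - 1) s i j) *
          C₀ * Aᵀ * Γ⁻¹) *ᵥ ε := by
  intro T hT
  have hα0 : (0:ℝ) < α := lt_of_lt_of_le one_pos hα
  have hμnn : ∀ i : Fin n, 0 ≤ μ i := by
    intro i
    rcases lt_or_ge (i : ℕ) k with h | h
    · exact le_of_lt (hμpos i h)
    · exact le_of_eq (hμzero i h).symm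
  have hC₀u : IsUnit C₀.det := (isUnit_iff_ne_zero).2 (ne_of_gt hC₀.det_pos)
  have hSS : S * S⁻¹ = 1 := Matrix.mul_nonsing_inv S hS
  have hS'S : S⁻¹ * S = 1 := Matrix.nonsing_inv_mul S hS
  -- shorthand
  set cF : ℝ → Fin n → ℝ := fun t i => 1 + α * t * μ i with hcF
  have hcpos : ∀ t : ℝ, 0 ≤ t → ∀ i, 0 < cF t i := by
    intro t ht i
    have : 0 ≤ α * t * μ i := by have := hμnn i; positivity
    simp only [hcF]; linarith
  -- Step A : formula for C t
  have hCt : ∀ t : ℝ, 0 ≤ t →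
      C t = S * Matrix.diagonal (fun i => (cF t i)⁻¹) * S⁻¹ * C₀ := by
    intro t ht
    set E := Matrix.diagonal (cF t) with hE
    set E' := Matrix.diagonal (fun i => (cF t i)⁻¹) with hE'
    have hEE' : E * E' = 1 := by
      rw [hE, hE', Matrix.diagonal_mul_diagonal]
      have : (fun i => cF t i * (cF t i)⁻¹) = fun _ : Fin n => (1:ℝ) := by
        funext i; exact mul_inv_cancel₀ (ne_of_gt (hcpos t ht i))
      rw [this, Matrix.diagonal_one]
    have hX : 1 + (α * t) • (Aᵀ * Γ⁻¹ * A * C₀) = C₀⁻¹ * (S * E * S⁻¹) * C₀ := by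
      have h1 : Aᵀ * Γ⁻¹ * A * C₀ = C₀⁻¹ * (C₀ * Aᵀ * Γ⁻¹ * A) * C₀ := by
        rw [show C₀ * Aᵀ * Γ⁻¹ * A = C₀ * (Aᵀ * Γ⁻¹ * A) from by
            simp only [Matrix.mul_assoc],
          ← Matrix.mul_assoc C₀⁻¹, Matrix.nonsing_inv_mul C₀ hC₀u, Matrix.one_mul]
      have hEdec : E = 1 + (α * t) • Matrix.diagonal μ := by
        rw [hE, ← Matrix.diagonal_one, ← Matrix.diagonal_smul, ← Matrix.diagonal_add]
        congr 1
      rw [h1, hdiag, hEdec]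
      simp only [Matrix.mul_add, Matrix.add_mul, Matrix.mul_one, Matrix.one_mul,
        Matrix.mul_smul, Matrix.smul_mul, hSS]
      rw [Matrix.nonsing_inv_mul C₀ hC₀u]
    have hinv : (1 + (α * t) • (Aᵀ * Γ⁻¹ * A * C₀))⁻¹ = C₀⁻¹ * (S * E' * S⁻¹) * C₀ := by
      apply Matrix.inv_eq_right_inv
      rw [hX]
      calc C₀⁻¹ * (S * E * S⁻¹) * C₀ * (C₀⁻¹ * (S * E' * S⁻¹) * C₀)
          = C₀⁻¹ * ((S * E * S⁻¹) * (C₀ * (C₀⁻¹ * ((S * E' * S⁻¹) * C₀)))) := by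
            simp only [Matrix.mul_assoc]
        _ = C₀⁻¹ * ((S * E * S⁻¹) * ((S * E' * S⁻¹) * C₀)) := by
            rw [Matrix.mul_nonsing_inv_cancel_left _ _ hC₀u]
        _ = C₀⁻¹ * (S * (E * (S⁻¹ * (S * (E' * (S⁻¹ * C₀)))))) := by
            simp only [Matrix.mul_assoc]
        _ = C₀⁻¹ * (S * (E * (E' * (S⁻¹ * C₀)))) := by
            rw [Matrix.nonsing_inv_mul_cancel_left _ _ hS]
        _ = C₀⁻¹ * (S * ((E * E') * (S⁻¹ * C₀))) := by
            simp only [Matrix.mul_assoc]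
        _ = C₀⁻¹ * (S * (S⁻¹ * C₀)) := by rw [hEE', Matrix.one_mul]
        _ = 1 := by
            rw [← Matrix.mul_assoc S, hSS, Matrix.one_mul,
              Matrix.nonsing_inv_mul C₀ hC₀u]
    rw [hC t, hinv, ← Matrix.mul_assoc, ← Matrix.mul_assoc,
      Matrix.mul_nonsing_inv C₀ hC₀u, Matrix.one_mul]
  -- Step B : coordinate ODE
  set B : Matrix (Fin n) (Fin m) ℝ := S⁻¹ * (C₀ * (Aᵀ * Γ⁻¹)) with hB
  set b : Fin n → ℝ := B *ᵥ ε with hbdef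
  set u : Fin n → ℝ := S⁻¹ *ᵥ udag with hu
  set z₀ : Fin n → ℝ := S⁻¹ *ᵥ x₀ with hz₀
  set w : ℝ → Fin n → ℝ := fun t => S⁻¹ *ᵥ x t with hw
  have hBA : B * A = Matrix.diagonal μ * S⁻¹ := by
    rw [hB, Matrix.mul_assoc, show C₀ * (Aᵀ * Γ⁻¹) * A = C₀ * Aᵀ * Γ⁻¹ * A from by
      simp only [Matrix.mul_assoc], hdiag, ← Matrix.mul_assoc, ← Matrix.mul_assoc,
      hS'S, Matrix.one_mul]
  have hSC : ∀ t : ℝ, 0 ≤ t → S⁻¹ * (C t * Aᵀ * Γ⁻¹) =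
      Matrix.diagonal (fun i => (cF t i)⁻¹) * B := by
    intro t ht
    rw [hCt t ht, hB]
    simp only [Matrix.mul_assoc]
    rw [Matrix.nonsing_inv_mul_cancel_left _ _ hS]
  have hval : ∀ t : ℝ, 0 ≤ t →
      S⁻¹ *ᵥ (-((C t * Aᵀ * Γ⁻¹) *ᵥ (A *ᵥ x t - y))) =
      fun i => -(μ i / cF t i) * (w t i - u i) + b i / cF t i := by
    intro t ht
    rw [Matrix.mulVec_neg, Matrix.mulVec_mulVec, hSC t ht, ← Matrix.mulVec_mulVec, hy]
    have hBv : B *ᵥ (A *ᵥ x t - (A *ᵥ udag + ε)) =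
        (fun i => μ i * (w t i - u i) - b i) := by
      funext i
      rw [show A *ᵥ x t - (A *ᵥ udag + ε) = A *ᵥ (x t - udag) - ε from by
        rw [Matrix.mulVec_sub]; abel]
      rw [Matrix.mulVec_sub, Matrix.mulVec_mulVec, hBA, ← Matrix.mulVec_mulVec,
        Matrix.mulVec_sub]
      simp [Matrix.mulVec_diagonal, hw, hu, hbdef, mul_sub]
    rw [hBv]
    funext i
    have hne : cF t i ≠ 0 := ne_of_gt (hcpos t ht i)
    simp only [Pi.neg_apply, Matrix.mulVec_diagonal]
    field_simp
    ring
  have hwderiv : ∀ t : ℝ, 0 ≤ t → ∀ i : Fin n,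
      HasDerivAt (fun s => w s i)
        (-(μ i / cF t i) * (w t i - u i) + b i / cF t i) t := by
    intro t ht i
    have hsum : HasDerivAt (fun s => ∑ j, S⁻¹ i j * x s j)
        (∑ j, S⁻¹ i j * (-((C t * Aᵀ * Γ⁻¹) *ᵥ (A *ᵥ x t - y)) j)) t :=
      HasDerivAt.fun_sum (fun j _ => (hx t ht j).const_mul (S⁻¹ i j))
    have h1 : (fun s => w s i) = fun s => ∑ j, S⁻¹ i j * x s j := by
      funext s; simp [hw, Matrix.mulVec, dotProduct]
    have h2 : (∑ j, S⁻¹ i j * (-((C t * Aᵀ * Γ⁻¹) *ᵥ (A *ᵥ x t - y)) j)) =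
        -(μ i / cF t i) * (w t i - u i) + b i / cF t i := by
      have := congrFun (hval t ht) i
      simpa [Matrix.mulVec, dotProduct] using this
    rw [h1, ← h2]
    exact hsum
  have hw0 : w 0 = z₀ := by rw [hw]; simp only [hx0, hz₀]
  have hwT : ∀ i : Fin n, w T i = u i + ((cF T i) ^ (-(1/α) : ℝ)) * (z₀ i - u i) +
      ((cF T i) ^ (-(1/α) : ℝ)) *
        (∫ s in (0:ℝ)..T, (cF s i) ^ ((1/α - 1) : ℝ)) * b i := by
    intro i
    have := scalar_ode_aux α (μ i) hα (hμnn i) (u i) (b i) (fun t => w t i)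
      (fun t ht => hwderiv t ht i) T hT
    rw [← hw0]
    exact this
  -- Step C : assembly
  set dp : Fin n → ℝ := fun i => (cF T i) ^ (-(1/α) : ℝ) with hdp
  set di : Fin n → ℝ := fun i => ∫ s in (0:ℝ)..T, (cF s i) ^ ((1/α - 1) : ℝ) with hdi
  have hP : specPow S μ α (-(1 / α)) T = S * Matrix.diagonal dp * S⁻¹ := rfl
  have hii : ∀ l : Fin n, IntervalIntegrable (fun s => (cF s l) ^ ((1/α - 1) : ℝ))
      MeasureTheory.volume 0 T := by
    intro l
    apply ContinuousOn.intervalIntegrable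
    rw [uIcc_of_le hT]
    intro s hs
    have hne : cF s l ≠ 0 := ne_of_gt (hcpos s hs.1 l)
    have hcont : Continuous (fun s : ℝ => cF s l) := by
      simp only [hcF]
      exact continuous_const.add ((continuous_const.mul continuous_id).mul continuous_const)
    exact (hcont.continuousAt.rpow_const (Or.inl hne)).continuousWithinAt
  have entry : ∀ (d : Fin n → ℝ) (i j : Fin n),
      (S * Matrix.diagonal d * S⁻¹) i j = ∑ l, S i l * d l * S⁻¹ l j := by
    intro d i j
    rw [Matrix.mul_apply]
    refine Finset.sum_congr rfl (fun l _ => ?_)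
    rw [Matrix.mul_diagonal]
  have hI : (Matrix.of fun i j => ∫ s in (0:ℝ)..T, specPow S μ α (1 / α - 1) s i j) =
      S * Matrix.diagonal di * S⁻¹ := by
    ext i j
    show (∫ s in (0:ℝ)..T, specPow S μ α (1 / α - 1) s i j) =
      (S * Matrix.diagonal di * S⁻¹) i j
    rw [entry di i j]
    have h1 : ∀ s : ℝ, specPow S μ α (1 / α - 1) s i j =
        ∑ l, S i l * (cF s l) ^ ((1/α - 1) : ℝ) * S⁻¹ l j := by
      intro s
      exact entry _ i j
    simp_rw [h1]
    rw [intervalIntegral.integral_finset_sum (fun l _ =>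
      (((hii l).const_mul (S i l)).mul_const (S⁻¹ l j)))]
    refine Finset.sum_congr rfl (fun l _ => ?_)
    have : (fun s => S i l * (cF s l) ^ ((1/α - 1) : ℝ) * S⁻¹ l j) =
        (fun s => (S i l * S⁻¹ l j) * (cF s l) ^ ((1/α - 1) : ℝ)) := by
      funext s; ring
    calc (∫ s in (0:ℝ)..T, S i l * (cF s l) ^ ((1/α - 1) : ℝ) * S⁻¹ l j)
        = ∫ s in (0:ℝ)..T, (S i l * S⁻¹ l j) * (cF s l) ^ ((1/α - 1) : ℝ) := by
          rw [this]
      _ = (S i l * S⁻¹ l j) * di l := by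
          rw [intervalIntegral.integral_const_mul, hdi]
      _ = S i l * di l * S⁻¹ l j := by ring
  rw [hP, hI]
  -- the matrix in front of ε
  have hM2 : S * Matrix.diagonal dp * S⁻¹ * (S * Matrix.diagonal di * S⁻¹) * C₀ * Aᵀ * Γ⁻¹ =
      S * Matrix.diagonal (fun i => dp i * di i) * B := by
    rw [← Matrix.diagonal_mul_diagonal, hB]
    simp only [Matrix.mul_assoc]
    rw [Matrix.nonsing_inv_mul_cancel_left _ _ hS]
  rw [hM2]
  have hxT : x T = S *ᵥ w T := by
    rw [hw, Matrix.mulVec_mulVec, hSS, Matrix.one_mulVec]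
  have hx₀ : x₀ = S *ᵥ z₀ := by
    rw [hz₀, Matrix.mulVec_mulVec, hSS, Matrix.one_mulVec]
  have conj : ∀ (M : Matrix (Fin n) (Fin n) ℝ) (v : Fin n → ℝ),
      (S * M * S⁻¹) *ᵥ v = S *ᵥ (M *ᵥ (S⁻¹ *ᵥ v)) := by
    intro M v
    rw [Matrix.mulVec_mulVec, Matrix.mulVec_mulVec]
  have hM1 : (1 : Matrix (Fin n) (Fin n) ℝ) - S * Matrix.diagonal dp * S⁻¹ =
      S * (1 - Matrix.diagonal dp) * S⁻¹ := by
    rw [Matrix.mul_sub, Matrix.mul_one, Matrix.sub_mul, hSS]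
  have e2 : (S * Matrix.diagonal (fun i => dp i * di i) * B) *ᵥ ε =
      S *ᵥ (Matrix.diagonal (fun i => dp i * di i) *ᵥ b) := by
    rw [hbdef, ← Matrix.mulVec_mulVec, ← Matrix.mulVec_mulVec]
  rw [hxT, hx₀, hM1, conj, e2, ← Matrix.mulVec_add, ← Matrix.mulVec_add]
  apply congrArg (Matrix.mulVec S)
  have hIv : S⁻¹ *ᵥ (udag - S *ᵥ z₀) = u - z₀ := by
    rw [Matrix.mulVec_sub, Matrix.mulVec_mulVec, hS'S, Matrix.one_mulVec, ← hu]
  rw [hIv, Matrix.sub_mulVec, Matrix.one_mulVec]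
  funext i
  simp only [Pi.add_apply, Pi.sub_apply, Matrix.mulVec_diagonal]
  rw [hwT i]
  ring
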